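/- Let Λ ⊂ ℝⁿ be a rank-r lattice with basis ℓ₁, …, ℓ_r, and let 𝒜(Λ) be the lattice of alternating n×n matrices with all rows in Λ, viewed inside M_n(ℝ) ≅ ℝ^{n²} with the Frobenius norm. Then d(𝒜(Λ)) = 2^{r(r-1)/4} · d(Λ)^{r-1}, where d denotes the lattice determinant (covolume in the spanned subspace). -/

import Mathlib

open Matrix Finset

namespace DetAltAux

variable {r : ℕ}

abbrev P (r : ℕ) := {q : Fin r × Fin r // q.1 < q.2}

def pidx (q : P r) : ℕ := q.1.1 * r + q.1.2

lemma aux_lt (r i j k l : ℕ) (hj : j < r) (hl : l < r) :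
    i * r + j < k * r + l ↔ (i < k ∨ (i = k ∧ j < l)) := by
  rcases lt_trichotomy i k with hc | hc | hc
  · have h1 : (i + 1) * r ≤ k * r := Nat.mul_le_mul_right r hc
    constructor
    · intro _; exact Or.inl hc
    · intro _; nlinarith
  · subst hc
    simp [Nat.add_lt_add_iff_left, lt_irrefl]
  · have h1 : (k + 1) * r ≤ i * r := Nat.mul_le_mul_right r hc
    constructor
    · intro h; exfalso; nlinarith
    · rintro (h | ⟨h, _⟩) <;> omega

lemma pidx_lt_iff (q q' : P r) :
    pidx q < pidx q' ↔ ((q.1.1 : ℕ) < q'.1.1 ∨ ((q.1.1 : ℕ) = q'.1.1 ∧ (q.1.2 : ℕ) < q'.1.2)) :=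
  aux_lt r _ _ _ _ q.1.2.isLt q'.1.2.isLt

lemma pidx_injective : Function.Injective (pidx (r := r)) := by
  intro q q' h
  have h1 : ¬ pidx q < pidx q' := by omega
  have h2 : ¬ pidx q' < pidx q := by omega
  rw [pidx_lt_iff] at h1 h2
  exact Subtype.ext (Prod.ext (Fin.ext (by omega)) (Fin.ext (by omega)))

noncomputable def pord (r : ℕ) : LinearOrder (P r) where
  le a b := pidx a ≤ pidx b
  lt a b := pidx a < pidx b
  le_refl a := Nat.le_refl _
  le_trans a b c := Nat.le_trans
  lt_iff_le_not_ge a b := lt_iff_le_not_ge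
  le_antisymm a b h1 h2 := pidx_injective (Nat.le_antisymm h1 h2)
  le_total a b := Nat.le_total _ _
  toDecidableLE a b := inferInstanceAs (Decidable (pidx a ≤ pidx b))

def comp2 (A : Matrix (Fin r) (Fin r) ℝ) : Matrix (P r) (P r) ℝ :=
  Matrix.of fun q q' =>
    A q.1.1 q'.1.1 * A q.1.2 q'.1.2 - A q.1.1 q'.1.2 * A q.1.2 q'.1.1

lemma comp2_apply (A : Matrix (Fin r) (Fin r) ℝ) (q q' : P r) :
    comp2 A q q' = A q.1.1 q'.1.1 * A q.1.2 q'.1.2 - A q.1.1 q'.1.2 * A q.1.2 q'.1.1 := rfl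

lemma comp2_transpose (A : Matrix (Fin r) (Fin r) ℝ) : comp2 Aᵀ = (comp2 A)ᵀ := by
  ext q q'
  simp only [comp2_apply, Matrix.transpose_apply]
  ring

/-- the set of strictly increasing pairs, as a finset. -/
def sLT (r : ℕ) : Finset (Fin r × Fin r) := (univ ×ˢ univ).filter (fun w => w.1 < w.2)

lemma sum_subtype_sLT (f : Fin r × Fin r → ℝ) :
    ∑ w ∈ sLT r, f w = ∑ w : P r, f w.1 :=
  Finset.sum_subtype _ (by simp [sLT]) f

lemma prod_subtype_sLT (f : Fin r × Fin r → ℝ) :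
    ∏ w ∈ sLT r, f w = ∏ w : P r, f w.1 :=
  Finset.prod_subtype _ (by simp [sLT]) f

/-- key summation lemma: sum over all pairs equals sum over ordered pairs of the
symmetrization, assuming the diagonal vanishes. -/
lemma sum_pairs (g : Fin r → Fin r → ℝ) (hdiag : ∀ i, g i i = 0) :
    ∑ p, ∑ q, g p q = ∑ w : P r, (g w.1.1 w.1.2 + g w.1.2 w.1.1) := by
  classical
  have h0 : ∑ p, ∑ q, g p q = ∑ w ∈ (univ ×ˢ univ : Finset (Fin r × Fin r)), g w.1 w.2 := by
    rw [Finset.sum_product]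
  rw [h0, ← Finset.sum_filter_add_sum_filter_not (univ ×ˢ univ) (fun w => w.1 < w.2),
    ← Finset.sum_filter_add_sum_filter_not
      ((univ ×ˢ univ : Finset (Fin r × Fin r)).filter (fun w => ¬ w.1 < w.2))
      (fun w => w.2 < w.1)]
  have hzero : ∑ w ∈ (((univ ×ˢ univ : Finset (Fin r × Fin r)).filter
      (fun w => ¬ w.1 < w.2)).filter (fun w => ¬ w.2 < w.1)), g w.1 w.2 = 0 := by
    refine Finset.sum_eq_zero ?_
    rintro ⟨a, b⟩ hw
    simp only [Finset.mem_filter] at hw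
    have : a = b := le_antisymm (le_of_not_gt hw.2) (le_of_not_gt hw.1.2)
    subst this
    exact hdiag a
  have hswap : ∑ w ∈ (((univ ×ˢ univ : Finset (Fin r × Fin r)).filter
      (fun w => ¬ w.1 < w.2)).filter (fun w => w.2 < w.1)), g w.1 w.2
      = ∑ w ∈ sLT r, g w.2 w.1 := by
    refine Finset.sum_nbij' (fun w => (w.2, w.1)) (fun w => (w.2, w.1)) ?_ ?_ ?_ ?_ ?_
    · rintro ⟨a, b⟩ hw
      simp only [Finset.mem_filter, Finset.mem_product, Finset.mem_univ, true_and, sLT] at hw ⊢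
      exact hw.2
    · rintro ⟨a, b⟩ hw
      simp only [Finset.mem_filter, Finset.mem_product, Finset.mem_univ, true_and, sLT] at hw ⊢
      exact ⟨not_lt_of_gt hw, hw⟩
    · rintro ⟨a, b⟩ _; rfl
    · rintro ⟨a, b⟩ _; rfl
    · rintro ⟨a, b⟩ _; rfl
  rw [hzero, hswap, add_zero]
  have h1 : ((univ ×ˢ univ : Finset (Fin r × Fin r)).filter (fun w => w.1 < w.2)) = sLT r := rfl
  rw [h1, sum_subtype_sLT (fun w => g w.1 w.2), sum_subtype_sLT (fun w => g w.2 w.1),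
    ← Finset.sum_add_distrib]

lemma comp2_mul (A B : Matrix (Fin r) (Fin r) ℝ) : comp2 (A * B) = comp2 A * comp2 B := by
  ext q q'
  obtain ⟨⟨i, j⟩, hij⟩ := q
  obtain ⟨⟨k, l⟩, hkl⟩ := q'
  simp only [comp2_apply, Matrix.mul_apply]
  have key := sum_pairs (fun p q => A i p * A j q * (B p k * B q l - B p l * B q k))
    (fun p => by ring)
  have lhs : (∑ p, A i p * B p k) * (∑ p, A j p * B p l)
      - (∑ p, A i p * B p l) * (∑ p, A j p * B p k)
      = ∑ p, ∑ q, A i p * A j q * (B p k * B q l - B p l * B q k) := by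
    rw [Finset.sum_mul_sum, Finset.sum_mul_sum, ← Finset.sum_sub_distrib]
    refine Finset.sum_congr rfl fun p _ => ?_
    rw [← Finset.sum_sub_distrib]
    exact Finset.sum_congr rfl fun q _ => by ring
  rw [lhs, key]
  refine Finset.sum_congr rfl fun w _ => ?_
  ring

lemma prod_pairs (f : Fin r → ℝ) :
    ∏ w : P r, (f w.1.1 * f w.1.2) = (∏ i, f i) ^ (r - 1) := by
  classical
  rw [← prod_subtype_sLT (fun w => f w.1 * f w.2), Finset.prod_mul_distrib]
  have hswap : ∏ w ∈ sLT r, f w.2 = ∏ w ∈ ((univ ×ˢ univ : Finset (Fin r × Fin r)).filter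
      (fun w => w.2 < w.1)), f w.1 := by
    refine Finset.prod_nbij' (fun w => (w.2, w.1)) (fun w => (w.2, w.1)) ?_ ?_ ?_ ?_ ?_
    · rintro ⟨a, b⟩ hw
      simp only [Finset.mem_filter, Finset.mem_product, Finset.mem_univ, true_and, sLT] at hw ⊢
      exact hw
    · rintro ⟨a, b⟩ hw
      simp only [Finset.mem_filter, Finset.mem_product, Finset.mem_univ, true_and, sLT] at hw ⊢
      exact hw
    · rintro ⟨a, b⟩ _; rfl
    · rintro ⟨a, b⟩ _; rfl
    · rintro ⟨a, b⟩ _; rfl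
  rw [hswap]
  have hdisj : Disjoint (sLT r)
      ((univ ×ˢ univ : Finset (Fin r × Fin r)).filter (fun w => w.2 < w.1)) := by
    rw [Finset.disjoint_left]
    rintro ⟨a, b⟩ h1 h2
    simp only [sLT, Finset.mem_filter, Finset.mem_product, Finset.mem_univ, true_and] at h1 h2
    exact absurd (h1.trans h2) (lt_irrefl _)
  rw [← Finset.prod_union hdisj]
  have hunion : sLT r ∪ ((univ ×ˢ univ : Finset (Fin r × Fin r)).filter (fun w => w.2 < w.1))
      = (univ ×ˢ univ : Finset (Fin r × Fin r)).filter (fun w => w.1 ≠ w.2) := by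
    ext ⟨a, b⟩
    simp only [sLT, Finset.mem_union, Finset.mem_filter, Finset.mem_product, Finset.mem_univ,
      true_and]
    constructor
    · rintro (h | h)
      · exact ne_of_lt h
      · exact ne_of_gt h
    · intro h
      rcases lt_or_gt_of_ne h with h | h
      · exact Or.inl h
      · exact Or.inr h
  rw [hunion, Finset.prod_filter, Finset.prod_product]
  have : ∀ i : Fin r, (∏ j : Fin r, if i ≠ j then f i else 1) = f i ^ (r - 1) := by
    intro i
    rw [← Finset.prod_filter, Finset.prod_const]
    congr 1
    have : (univ.filter (fun j : Fin r => i ≠ j)) = univ.erase i := by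
      ext j
      simp [Finset.mem_erase, eq_comm, ne_comm]
    rw [this, Finset.card_erase_of_mem (Finset.mem_univ i), Finset.card_univ, Fintype.card_fin]
  simp_rw [this]
  rw [← Finset.prod_pow]

lemma blockTriangular_comp2 {L : Matrix (Fin r) (Fin r) ℝ}
    (hL : ∀ i j : Fin r, i < j → L i j = 0) :
    ∀ q q' : P r, pidx q < pidx q' → comp2 L q q' = 0 := by
  intro q q' hlt
  rw [pidx_lt_iff] at hlt
  obtain ⟨⟨i, j⟩, hij⟩ := q
  obtain ⟨⟨k, l⟩, hkl⟩ := q'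
  simp only at hlt
  rw [comp2_apply]
  simp only
  rcases hlt with hc | ⟨hc, hc'⟩
  · have h1 : L i k = 0 := hL i k hc
    have h2 : L i l = 0 := hL i l (lt_trans (show i < k from hc) hkl)
    rw [h1, h2]; ring
  · have hik : i = k := Fin.ext hc
    subst hik
    have h1 : L j l = 0 := hL j l hc'
    have h2 : L i l = 0 := hL i l (lt_of_lt_of_le hkl le_rfl)
    rw [h1, h2]; ring

lemma det_comp2_lower {L : Matrix (Fin r) (Fin r) ℝ}
    (hL : ∀ i j : Fin r, i < j → L i j = 0) :
    (comp2 L).det = (∏ i, L i i) ^ (r - 1) := by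
  letI := pord r
  rw [Matrix.det_of_lowerTriangular (comp2 L)
    (fun q q' h => blockTriangular_comp2 hL q q' (by exact h))]
  have : ∀ q : P r, comp2 L q q = L q.1.1 q.1.1 * L q.1.2 q.1.2 := by
    intro q
    rw [comp2_apply, hL q.1.1 q.1.2 q.2]
    ring
  simp_rw [this]
  exact prod_pairs (fun i => L i i)

lemma det_comp2_posDef {G : Matrix (Fin r) (Fin r) ℝ} (hG : G.PosDef) :
    (comp2 G).det = G.det ^ (r - 1) := by
  haveI hwf : WellFoundedLT (Fin r) := inferInstance
  have hdecomp := LDL.diag_eq_lowerInv_conj hG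
  set Linv := LDL.lowerInv hG with hLinv
  have hconj : (Linv)ᴴ = Linvᵀ := Matrix.conjTranspose_eq_transpose_of_trivial Linv
  rw [hconj] at hdecomp
  have hLtri : ∀ i j : Fin r, i < j → Linv i j = 0 := fun i j h =>
    LDL.lowerInv_triangular hG h
  -- determinant of Linv
  have hdetL : Linv.det = ∏ i, Linv i i :=
    Matrix.det_of_lowerTriangular Linv (fun i j h => hLtri i j h)
  have hdetdecomp : (LDL.diag hG).det = Linv.det * G.det * Linv.det := by
    rw [hdecomp, Matrix.det_mul, Matrix.det_mul, Matrix.det_transpose]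
  have hlc := LDL.lower_conj_diag hG
  have hGdetpos : 0 < G.det := hG.det_pos
  have hGdet := congrArg Matrix.det hlc
  rw [Matrix.det_mul, Matrix.det_mul, Matrix.det_conjTranspose, star_trivial] at hGdet
  have hDne : (LDL.diag hG).det ≠ 0 := by
    intro h0
    rw [h0] at hGdet
    simp only [mul_zero, zero_mul] at hGdet
    exact hGdetpos.ne' hGdet.symm
  have hLne : Linv.det ≠ 0 := by
    intro h0
    rw [hdetdecomp, h0] at hDne
    simp at hDne
  -- comp2 of the decomposition
  have hcomp : comp2 (LDL.diag hG) = comp2 Linv * comp2 G * comp2 Linvᵀ := by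
    rw [← comp2_mul, ← comp2_mul, ← hdecomp]
  -- determinants
  have hdiagdet : (comp2 (LDL.diag hG)).det = ((LDL.diag hG).det) ^ (r - 1) := by
    have hdtri : ∀ i j : Fin r, i < j → (LDL.diag hG) i j = 0 := by
      intro i j h
      unfold LDL.diag
      convert Matrix.diagonal_apply_ne (LDL.diagEntries hG) (ne_of_lt h) using 2
    rw [det_comp2_lower hdtri,
      Matrix.det_of_lowerTriangular (LDL.diag hG) (fun i j h => hdtri i j h)]
  have hLcompdet : (comp2 Linv).det = Linv.det ^ (r - 1) := by
    rw [det_comp2_lower hLtri, hdetL]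
  have hLTcompdet : (comp2 Linvᵀ).det = Linv.det ^ (r - 1) := by
    rw [comp2_transpose, Matrix.det_transpose, hLcompdet]
  have heq : Linv.det ^ (r - 1) * (comp2 G).det * Linv.det ^ (r - 1)
      = (Linv.det * G.det * Linv.det) ^ (r - 1) := by
    rw [← hdetdecomp, ← hdiagdet, hcomp, Matrix.det_mul, Matrix.det_mul,
      hLcompdet, hLTcompdet]
  have hpow : (Linv.det * G.det * Linv.det) ^ (r - 1)
      = Linv.det ^ (r - 1) * G.det ^ (r - 1) * Linv.det ^ (r - 1) := by
    rw [mul_pow, mul_pow]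
  rw [hpow] at heq
  have hne : Linv.det ^ (r - 1) ≠ 0 := pow_ne_zero _ hLne
  have h1 := mul_right_cancel₀ hne heq
  exact mul_left_cancel₀ hne h1

lemma card_P (r : ℕ) : 2 * Fintype.card (P r) = r * (r - 1) := by
  classical
  have e : P r ≃ (Σ j : Fin r, Fin (j : ℕ)) :=
    { toFun := fun q => ⟨q.1.2, ⟨q.1.1, q.2⟩⟩
      invFun := fun s => ⟨(⟨(s.2 : ℕ), lt_trans s.2.2 s.1.2⟩, s.1), s.2.2⟩
      left_inv := fun q => by
        ext <;> rfl
      right_inv := fun s => by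
        rcases s with ⟨j, i⟩; rfl }
  rw [Fintype.card_congr e, Fintype.card_sigma]
  simp only [Fintype.card_fin]
  rw [Fin.sum_univ_eq_sum_range (fun i => i) r, mul_comm 2]
  exact Finset.sum_range_id_mul_two r

lemma sqrt_pow (x : ℝ) (hx : 0 ≤ x) (m : ℕ) : Real.sqrt (x ^ m) = Real.sqrt x ^ m := by
  induction m with
  | zero => simp
  | succ k ih => rw [pow_succ, pow_succ, Real.sqrt_mul (pow_nonneg hx k), ih]

end DetAltAux

theorem det_alt_lattice (n r : ℕ) (ℓ : Fin r → (Fin n → ℝ))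
    (hli : LinearIndependent ℝ ℓ) :
    Real.sqrt
        (Matrix.det (Matrix.of
          (fun q q' : {q : Fin r × Fin r // q.1 < q.2} =>
            ∑ a, ∑ b,
              (vecMulVec (ℓ q.1.1) (ℓ q.1.2) - vecMulVec (ℓ q.1.2) (ℓ q.1.1)) a b *
              (vecMulVec (ℓ q'.1.1) (ℓ q'.1.2) - vecMulVec (ℓ q'.1.2) (ℓ q'.1.1)) a b))) =
      (2 : ℝ) ^ (((r : ℝ) * ((r : ℝ) - 1)) / 4) *
        Real.sqrt (Matrix.det (Matrix.of fun i j : Fin r => ∑ k, ℓ i k * ℓ j k)) ^ (r - 1) := by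
  classical
  set G : Matrix (Fin r) (Fin r) ℝ := Matrix.of fun i j : Fin r => ∑ k, ℓ i k * ℓ j k with hGdef
  -- G is positive definite
  set B : Matrix (Fin n) (Fin r) ℝ := Matrix.of fun a i => ℓ i a with hBdef
  have hGB : G = Bᵀ * B := by
    ext i j
    simp [hGdef, hBdef, Matrix.mul_apply, Matrix.transpose_apply]
  have hGpos : G.PosDef := by
    constructor
    · rw [hGB]
      ext i j
      simp [Matrix.conjTranspose_apply, Matrix.mul_apply, Matrix.transpose_apply, mul_comm]
    · intro x hx
      have hBx : B *ᵥ x ≠ 0 := by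
        intro hzero
        apply hx
        have hsum : ∑ i, x i • ℓ i = 0 := by
          funext a
          have := congrFun hzero a
          simpa [Matrix.mulVec, dotProduct, hBdef, Finset.sum_apply, mul_comm] using this
        exact Finsupp.ext fun i => by simpa using Fintype.linearIndependent_iff.mp hli x hsum i
      have hcompute : star x ⬝ᵥ (G *ᵥ x) = ∑ a, (B *ᵥ x) a ^ 2 := by
        rw [hGB, ← Matrix.mulVec_mulVec, Matrix.dotProduct_mulVec, star_trivial,
          Matrix.vecMul_transpose]
        simp [dotProduct, sq]
      have hfs : (x.sum fun i xi => x.sum fun j xj => star xi * G i j * xj)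
          = star ⇑x ⬝ᵥ (G *ᵥ ⇑x) := by
        rw [Finsupp.sum_fintype _ _ (by simp)]
        simp only [Finsupp.sum_fintype, star_zero, zero_mul, mul_zero, implies_true]
        simp [dotProduct, mulVec, Finset.mul_sum, mul_assoc]
      rw [hfs, hcompute]
      obtain ⟨a, ha⟩ : ∃ a, (B *ᵥ x) a ≠ 0 := by
        by_contra h
        push_neg at h
        exact hBx (funext h)
      refine Finset.sum_pos' (fun a _ => sq_nonneg _) ⟨a, Finset.mem_univ a, ?_⟩
      positivity
  -- the Gram matrix of the alternating basis equals 2 • DetAltAux.comp2 G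
  have hM : (Matrix.of
          (fun q q' : {q : Fin r × Fin r // q.1 < q.2} =>
            ∑ a, ∑ b,
              (vecMulVec (ℓ q.1.1) (ℓ q.1.2) - vecMulVec (ℓ q.1.2) (ℓ q.1.1)) a b *
              (vecMulVec (ℓ q'.1.1) (ℓ q'.1.2) - vecMulVec (ℓ q'.1.2) (ℓ q'.1.1)) a b))
      = (2 : ℝ) • DetAltAux.comp2 G := by
    ext q q'
    obtain ⟨⟨i, j⟩, hij⟩ := q
    obtain ⟨⟨k, l⟩, hkl⟩ := q'
    simp only [Matrix.of_apply, Matrix.smul_apply, DetAltAux.comp2_apply, smul_eq_mul, hGdef,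
      Matrix.sub_apply, Matrix.vecMulVec_apply]
    have expand : ∀ u v u' v' : Fin n → ℝ,
        (∑ a, ∑ b, (u a * v b) * (u' a * v' b)) = (∑ a, u a * u' a) * (∑ b, v b * v' b) := by
      intro u v u' v'
      rw [Finset.sum_mul_sum]
      exact Finset.sum_congr rfl fun a _ => Finset.sum_congr rfl fun b _ => by ring
    have step : ∑ a, ∑ b,
        (ℓ i a * ℓ j b - ℓ j a * ℓ i b) * (ℓ k a * ℓ l b - ℓ l a * ℓ k b)
        = (∑ a, ℓ i a * ℓ k a) * (∑ b, ℓ j b * ℓ l b)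
          - (∑ a, ℓ i a * ℓ l a) * (∑ b, ℓ j b * ℓ k b)
          - (∑ a, ℓ j a * ℓ k a) * (∑ b, ℓ i b * ℓ l b)
          + (∑ a, ℓ j a * ℓ l a) * (∑ b, ℓ i b * ℓ k b) := by
      rw [← expand, ← expand, ← expand, ← expand]
      simp only [← Finset.sum_sub_distrib, ← Finset.sum_add_distrib]
      exact Finset.sum_congr rfl fun a _ => Finset.sum_congr rfl fun b _ => by ring
    rw [step]
    ring
  rw [hM, Matrix.det_smul]
  have hdetc : (DetAltAux.comp2 G).det = G.det ^ (r - 1) := DetAltAux.det_comp2_posDef hGpos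
  rw [hdetc]
  have hdetG : 0 < G.det := hGpos.det_pos
  have hcard : 2 * Fintype.card (DetAltAux.P r) = r * (r - 1) := DetAltAux.card_P r
  set c := Fintype.card (DetAltAux.P r) with hc
  have h2c : Real.sqrt ((2 : ℝ) ^ c) = (2 : ℝ) ^ (((r : ℝ) * ((r : ℝ) - 1)) / 4) := by
    have hcast : ((2 * c : ℕ) : ℝ) = (r : ℝ) * ((r : ℝ) - 1) := by
      rw [hcard]
      rcases r with _ | r
      · simp
      · push_cast [Nat.succ_sub_one]
        ring
    rw [Real.sqrt_eq_rpow, ← Real.rpow_natCast (2 : ℝ) c, ← Real.rpow_mul (by norm_num)]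
    congr 1
    push_cast at hcast ⊢
    nlinarith [hcast]
  rw [Real.sqrt_mul (by positivity), h2c, DetAltAux.sqrt_pow _ (le_of_lt hdetG)]
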